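/- Let P = {p_1 ≤ p_2 ≤ ... ≤ p_N} and Q = {q_1, ..., q_N} be two finite sequences of real numbers. Define d_i = |p_i - q_i|, ε = max_i d_i, and δ = Σ_i d_i. Then there exists a set R ⊂ ℝ and a map π : P ∪ Q → R sending each point to its nearest element of R (rounding up at midpoints) such that (1) π(p_i) = π(q_i) for all i, and (2) |π(x) - x| ≤ 3ε + 4δ for all x ∈ P ∪ Q. -/

import Mathlib

open Set MeasureTheory

private lemma abs_le_left (u v x : ℝ) (huv : u ≤ v) (hsum : u + v ≤ 2*x) : |v - x| ≤ |u - x| := by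
  have hux : u ≤ x := by linarith
  have h1 : |u - x| = x - u := by rw [abs_sub_comm, abs_of_nonneg (by linarith)]
  rw [h1, abs_le]
  constructor <;> linarith

private lemma abs_lt_right (u v x : ℝ) (huv : u < v) (hsum : 2*x < u + v) : |u - x| < |v - x| := by
  have hvx : x < v := by linarith
  have h1 : |v - x| = v - x := abs_of_nonneg (by linarith)
  rw [h1, abs_lt]
  constructor <;> linarith

private lemma reps_exist (δ : ℝ) (hδ : 0 ≤ δ) (t : ℕ) (a b : ℕ → ℝ)
    (hab : ∀ k, k < t → a k ≤ b k ∧ b k - a k ≤ δ)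
    (hord : ∀ k, k + 1 < t → b k < a (k + 1)) :
    ∃ r : ℕ → ℝ, Monotone r ∧ (∀ k, k < t → a k ≤ r k ∧ r k ≤ a k + 2 * δ) ∧
      (∀ j k, j < k → k < t → r j ≤ r k ∧ (r j = r k ∨ r j + r k ≤ 2 * a k)) ∧
      (∀ k j, k < j → j < t → r k = r j ∨ (r k < r j ∧ 2 * b k < r k + r j)) := by
  classical
  let r : ℕ → ℝ := fun n => Nat.rec (a 0)
    (fun k rk => max rk (min (2 * a (k+1) - rk)
      (max (2 * b k - rk + min (a (k+1) - b k) δ) (a (k+1))))) n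
  have hr0 : r 0 = a 0 := rfl
  have hrs : ∀ k, r (k+1) = max (r k) (min (2 * a (k+1) - r k)
      (max (2 * b k - r k + min (a (k+1) - b k) δ) (a (k+1)))) := fun k => rfl
  have hmono : Monotone r := monotone_nat_of_le_succ (fun k => by rw [hrs k]; exact le_max_left _ _)
  have inv : ∀ k, k < t → a k ≤ r k ∧ r k ≤ a k + 2 * δ := by
    intro k
    induction k with
    | zero => intro _; rw [hr0]; constructor <;> linarith
    | succ k ih =>
      intro hk1
      have hk : k < t := Nat.lt_of_succ_lt hk1
      obtain ⟨h1, h2⟩ := ih hk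
      obtain ⟨hab1, hab2⟩ := hab k hk
      have hBA : b k < a (k+1) := hord k hk1
      set w : ℝ := min (a (k+1) - b k) δ with hwdef
      have hw0 : 0 ≤ w := le_min (by linarith) hδ
      have hw1 : w ≤ δ := min_le_right _ _
      have hw2 : w ≤ a (k+1) - b k := min_le_left _ _
      rw [hrs k]
      set r0 := r k with hr0def
      rcases le_or_gt (min (2 * a (k+1) - r0) (max (2 * b k - r0 + w) (a (k+1)))) r0 with hXr | hXr
      · rw [max_eq_left hXr]
        rcases min_le_iff.mp hXr with h | h
        · constructor <;> linarith
        · have : a (k+1) ≤ r0 := le_trans (le_max_right _ _) h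
          constructor <;> linarith
      · rw [max_eq_right hXr.le]
        rcases le_total (2 * a (k+1) - r0) (max (2 * b k - r0 + w) (a (k+1))) with hmin | hmin
        · rw [min_eq_left hmin] at hXr ⊢
          rcases le_max_iff.mp hmin with h | h
          · exfalso; linarith
          · constructor <;> linarith
        · rw [min_eq_right hmin] at hXr ⊢
          rcases le_total (2 * b k - r0 + w) (a (k+1)) with h2' | h2'
          · rw [max_eq_right h2'] at hXr ⊢
            constructor <;> linarith
          · rw [max_eq_left h2'] at hXr ⊢
            constructor <;> linarith
  have step : ∀ k, k + 1 < t → r k = r (k+1) ∨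
      (r k < r (k+1) ∧ 2 * b k < r k + r (k+1) ∧ r k + r (k+1) ≤ 2 * a (k+1)) := by
    intro k hk1
    have hk : k < t := Nat.lt_of_succ_lt hk1
    obtain ⟨h1, h2⟩ := inv k hk
    obtain ⟨hab1, hab2⟩ := hab k hk
    have hBA : b k < a (k+1) := hord k hk1
    set w : ℝ := min (a (k+1) - b k) δ with hwdef
    have hw0 : 0 ≤ w := le_min (by linarith) hδ
    have hw1 : w ≤ δ := min_le_right _ _
    have hw2 : w ≤ a (k+1) - b k := min_le_left _ _
    have hwd : w = 0 → δ = 0 := by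
      intro hw
      by_cases hc : δ ≤ a (k+1) - b k
      · rw [hwdef, min_eq_right hc] at hw; exact hw
      · exfalso; rw [hwdef, min_eq_left (le_of_not_ge hc)] at hw; linarith
    rw [hrs k]
    set r0 := r k with hr0def
    rcases le_or_gt (min (2 * a (k+1) - r0) (max (2 * b k - r0 + w) (a (k+1)))) r0 with hXr | hXr
    · left; rw [max_eq_left hXr]
    · right
      rw [max_eq_right hXr.le]
      refine ⟨hXr, ?_, by
        have := min_le_left (2 * a (k+1) - r0) (max (2 * b k - r0 + w) (a (k+1)))
        linarith⟩
      rcases le_total (2 * a (k+1) - r0) (max (2 * b k - r0 + w) (a (k+1))) with hmin | hmin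
      · rw [min_eq_left hmin]; linarith
      · rw [min_eq_right hmin] at hXr ⊢
        rcases le_total (2 * b k - r0 + w) (a (k+1)) with h2' | h2'
        · rw [max_eq_right h2'] at hXr ⊢
          rcases (eq_or_lt_of_le hw0) with hw | hw
          · have hd0 : δ = 0 := hwd hw.symm
            linarith
          · linarith
        · rw [max_eq_left h2'] at hXr ⊢
          rcases (eq_or_lt_of_le hw0) with hw | hw
          · have hd0 : δ = 0 := hwd hw.symm
            linarith
          · linarith
  have amono : ∀ k, k + 1 < t → a k < a (k+1) := by
    intro k hk1
    have h := hord k hk1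
    have h2 := (hab k (Nat.lt_of_succ_lt hk1)).1
    linarith
  have bmono : ∀ k, k < t → ∀ j, j ≤ k → b j ≤ b k := by
    intro k
    induction k with
    | zero => intro _ j hj; have : j = 0 := Nat.le_zero.mp hj; rw [this]
    | succ k ih =>
      intro hk1 j hj
      rcases Nat.lt_succ_iff_lt_or_eq.mp (Nat.lt_succ_of_le hj) with h | h
      · have h1 : b j ≤ b k := ih (Nat.lt_of_succ_lt hk1) j (Nat.lt_succ_iff.mp h)
        have h2 : b k < a (k+1) := hord k hk1
        have h3 := (hab (k+1) hk1).1
        linarith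
      · rw [h]
  have pl : ∀ j k, j < k → k < t → r j ≤ r k ∧ (r j = r k ∨ r j + r k ≤ 2 * a k) := by
    intro j k
    induction k with
    | zero => intro h; exact absurd h (Nat.not_lt_zero j)
    | succ k ih =>
      intro hjk hk1
      have hle : r j ≤ r (k+1) := hmono (Nat.le_of_lt hjk)
      refine ⟨hle, ?_⟩
      rcases Nat.lt_succ_iff_lt_or_eq.mp hjk with h | h
      · have hk : k < t := Nat.lt_of_succ_lt hk1
        obtain ⟨hle', IH⟩ := ih h hk
        rcases step k hk1 with hst | ⟨hst1, hst2, hst3⟩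
        · rcases IH with he | hs
          · left; rw [he, hst]
          · right; rw [← hst]
            have := amono k hk1
            linarith
        · right
          rcases IH with he | hs
          · rw [he]; linarith
          · linarith
      · subst h
        rcases step j hk1 with hst | ⟨hst1, hst2, hst3⟩
        · left; exact hst
        · right; linarith
  have pr : ∀ k j, k < j → j < t → r k = r j ∨ (r k < r j ∧ 2 * b k < r k + r j) := by
    intro k j
    induction j with
    | zero => intro h; exact absurd h (Nat.not_lt_zero k)
    | succ j ih =>
      intro hkj hj1
      rcases Nat.lt_succ_iff_lt_or_eq.mp hkj with h | h
      · have hj : j < t := Nat.lt_of_succ_lt hj1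
        rcases ih h hj with he | ⟨hlt, hsum⟩
        · rcases step j hj1 with hst | ⟨hst1, hst2, hst3⟩
          · left; rw [he, hst]
          · right
            constructor
            · rw [he]; exact hst1
            · have hb : b k ≤ b j := bmono j hj k (Nat.le_of_lt h)
              rw [he] at *
              linarith
        · have hle : r j ≤ r (j+1) := hmono (Nat.le_succ j)
          right
          exact ⟨lt_of_lt_of_le hlt hle, by linarith⟩
      · subst h
        rcases step k hj1 with hst | ⟨hst1, hst2, hst3⟩
        · left; exact hst
        · right; exact ⟨hst1, hst2⟩
  exact ⟨r, hmono, inv, pl, pr⟩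

theorem rounding_lemma (N : ℕ) (hN : 0 < N) (P Q : Fin N → ℝ) (hP : Monotone P)
    (ε δ : ℝ)
    (hε : ε = Finset.univ.sup' ⟨⟨0, hN⟩, Finset.mem_univ _⟩ (fun i => |P i - Q i|))
    (hδ : δ = ∑ i, |P i - Q i|) :
    ∃ (R : Set ℝ) (π : ℝ → ℝ),
      (∀ x ∈ Set.range P ∪ Set.range Q,
        π x ∈ R ∧
        (∀ r ∈ R, |π x - x| ≤ |r - x|) ∧
        (∀ r ∈ R, |r - x| = |π x - x| → r ≤ π x) ∧
        |π x - x| ≤ 3 * ε + 4 * δ) ∧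
      (∀ i, π (P i) = π (Q i)) := by
  classical
  have hδ0 : 0 ≤ δ := hδ ▸ Finset.sum_nonneg (fun i _ => abs_nonneg _)
  have i0 : Fin N := ⟨0, hN⟩
  have hε0 : 0 ≤ ε := by
    rw [hε]
    exact le_trans (abs_nonneg (P i0 - Q i0)) (Finset.le_sup' (fun i => |P i - Q i|) (Finset.mem_univ i0))
  set U : Set ℝ := ⋃ i, Set.uIcc (P i) (Q i) with hU
  have hUclosed : IsClosed U := isClosed_iUnion_of_finite (fun i => isClosed_Icc)
  have hne : (Finset.univ : Finset (Fin N)).Nonempty := ⟨i0, Finset.mem_univ _⟩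
  set m : ℝ := Finset.univ.inf' hne (fun i => min (P i) (Q i)) with hm
  set M : ℝ := Finset.univ.sup' hne (fun i => max (P i) (Q i)) with hM
  have hUsub : U ⊆ Icc m M := by
    intro y hy
    rw [hU, Set.mem_iUnion] at hy
    obtain ⟨i, hi⟩ := hy
    rcases hi with ⟨h1, h2⟩
    constructor
    · exact le_trans (Finset.inf'_le (fun i => min (P i) (Q i)) (Finset.mem_univ i)) h1
    · exact le_trans h2 (Finset.le_sup' (fun i => max (P i) (Q i)) (Finset.mem_univ i))
  have hUbddB : BddBelow U := ⟨m, fun y hy => (hUsub hy).1⟩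
  have hUbddA : BddAbove U := ⟨M, fun y hy => (hUsub hy).2⟩
  have hUvol : volume U ≤ ENNReal.ofReal δ := by
    calc volume U ≤ ∑' i, volume (Set.uIcc (P i) (Q i)) := measure_iUnion_le _
    _ = ∑ i, volume (Set.uIcc (P i) (Q i)) := tsum_fintype _
    _ = ∑ i, ENNReal.ofReal (|P i - Q i|) := by
        refine Finset.sum_congr rfl (fun i _ => ?_)
        show volume (Icc (P i ⊓ Q i) (P i ⊔ Q i)) = _
        rw [Real.volume_Icc, max_sub_min_eq_abs, abs_sub_comm]
    _ = ENNReal.ofReal (∑ i, |P i - Q i|) := (ENNReal.ofReal_sum_of_nonneg (fun i _ => abs_nonneg _)).symm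
    _ = ENNReal.ofReal δ := by rw [hδ]
  set lo : ℝ → ℝ := fun x => sInf (connectedComponentIn U x) with hlo
  set hi : ℝ → ℝ := fun x => sSup (connectedComponentIn U x) with hhi
  have hcc : ∀ x ∈ U, connectedComponentIn U x = Icc (lo x) (hi x) ∧
      lo x ≤ x ∧ x ≤ hi x ∧ hi x - lo x ≤ δ ∧
      connectedComponentIn U (lo x) = connectedComponentIn U x := by
    intro x hx
    set C := connectedComponentIn U x with hC
    have hxC : x ∈ C := mem_connectedComponentIn hx
    have hCne : C.Nonempty := ⟨x, hxC⟩
    have hCU : C ⊆ U := connectedComponentIn_subset _ _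
    have hCb : BddBelow C := hUbddB.mono hCU
    have hCa : BddAbove C := hUbddA.mono hCU
    have hCpre : IsPreconnected C := isPreconnected_connectedComponentIn
    have hCclosed : IsClosed C := by
      have h1 : closure C ⊆ U := hUclosed.closure_subset_iff.mpr hCU
      have h2 : closure C ⊆ C :=
        hCpre.closure.subset_connectedComponentIn (subset_closure hxC) h1
      exact isClosed_of_closure_subset h2
    have hloC : lo x ∈ C := hCclosed.csInf_mem hCne hCb
    have hhiC : hi x ∈ C := hCclosed.csSup_mem hCne hCa
    have hIcc : C = Icc (lo x) (hi x) := by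
      apply Subset.antisymm
      · intro y hy; exact ⟨csInf_le hCb hy, le_csSup hCa hy⟩
      · exact hCpre.ordConnected.out hloC hhiC
    have hlox : lo x ≤ x := csInf_le hCb hxC
    have hhix : x ≤ hi x := le_csSup hCa hxC
    have hlen : hi x - lo x ≤ δ := by
      have h1 : volume C ≤ ENNReal.ofReal δ := le_trans (measure_mono hCU) hUvol
      rw [hIcc, Real.volume_Icc] at h1
      exact (ENNReal.ofReal_le_ofReal_iff hδ0).mp h1
    have heq : connectedComponentIn U (lo x) = connectedComponentIn U x :=
      (connectedComponentIn_eq hloC).symm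
    exact ⟨hIcc, hlox, hhix, hlen, heq⟩
  have hsep : ∀ x ∈ U, ∀ y ∈ U, lo x ≠ lo y → hi x < lo y ∨ hi y < lo x := by
    intro x hx y hy hnexy
    obtain ⟨hIx, hlx, hhx, _, _⟩ := hcc x hx
    obtain ⟨hIy, hly, hhy, _, _⟩ := hcc y hy
    have hdisj : connectedComponentIn U x ∩ connectedComponentIn U y = ∅ := by
      by_contra h
      obtain ⟨z, hz1, hz2⟩ := Set.nonempty_iff_ne_empty.mpr h
      have e1 := connectedComponentIn_eq hz1
      have e2 := connectedComponentIn_eq hz2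
      exact hnexy (by rw [hlo]; simp only; rw [e1, ← e2])
    by_contra hcon
    push_neg at hcon
    obtain ⟨h1, h2⟩ := hcon
    have hz : max (lo x) (lo y) ∈ connectedComponentIn U x ∩ connectedComponentIn U y := by
      rw [hIx, hIy]
      constructor
      · exact ⟨le_max_left _ _, max_le (le_trans hlx hhx) h1⟩
      · exact ⟨le_max_right _ _, max_le h2 (le_trans hly hhy)⟩
    rw [hdisj] at hz
    exact hz
  -- data and clusters
  set D : Finset ℝ := Finset.image P Finset.univ ∪ Finset.image Q Finset.univ with hD
  have hDU : ∀ x ∈ D, x ∈ U := by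
    intro x hx
    rw [hD, Finset.mem_union] at hx
    rcases hx with hx | hx
    · obtain ⟨i, _, rfl⟩ := Finset.mem_image.mp hx
      exact Set.mem_iUnion.mpr ⟨i, Set.left_mem_uIcc⟩
    · obtain ⟨i, _, rfl⟩ := Finset.mem_image.mp hx
      exact Set.mem_iUnion.mpr ⟨i, Set.right_mem_uIcc⟩
  set A : Finset ℝ := D.image lo with hA
  set t : ℕ := A.card with ht
  set e : Fin t ≃o {x // x ∈ A} := A.orderIsoOfFin rfl with he
  set a : ℕ → ℝ := fun k => if h : k < t then ((e ⟨k, h⟩ : {x // x ∈ A}) : ℝ) else 0 with ha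
  set b : ℕ → ℝ := fun k => hi (a k) with hb
  have haA : ∀ k, (h : k < t) → a k ∈ A ∧ a k = ((e ⟨k, h⟩ : {x // x ∈ A}) : ℝ) := by
    intro k h
    have : a k = ((e ⟨k, h⟩ : {x // x ∈ A}) : ℝ) := by rw [ha]; simp only [dif_pos h]
    exact ⟨this ▸ (e ⟨k, h⟩).2, this⟩
  have hakey : ∀ k, k < t → a k ∈ U ∧ lo (a k) = a k := by
    intro k hk
    obtain ⟨hmem, _⟩ := haA k hk
    rw [hA] at hmem
    obtain ⟨x, hxD, hlx⟩ := Finset.mem_image.mp hmem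
    have hxU : x ∈ U := hDU x hxD
    obtain ⟨hIx, hlx2, hhx, _, heqx⟩ := hcc x hxU
    have hloU : lo x ∈ U := by
      have : lo x ∈ connectedComponentIn U x := by
        rw [hIx]; exact ⟨le_refl _, le_trans hlx2 hhx⟩
      exact connectedComponentIn_subset _ _ this
    have hlolo : lo (lo x) = lo x := by
      rw [hlo]; simp only; rw [heqx]
    rw [← hlx]
    exact ⟨hloU, hlolo⟩
  have hab : ∀ k, k < t → a k ≤ b k ∧ b k - a k ≤ δ := by
    intro k hk
    obtain ⟨haU, hloa⟩ := hakey k hk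
    obtain ⟨_, hl1, hhia, hlen, _⟩ := hcc (a k) haU
    rw [hloa] at hlen
    exact ⟨hhia, hlen⟩
  have hord : ∀ k, k + 1 < t → b k < a (k + 1) := by
    intro k hk1
    have hk : k < t := Nat.lt_of_succ_lt hk1
    obtain ⟨hakU, hloak⟩ := hakey k hk
    obtain ⟨hak1U, hloak1⟩ := hakey (k+1) hk1
    have hlt : a k < a (k+1) := by
      obtain ⟨_, h1⟩ := haA k hk
      obtain ⟨_, h2⟩ := haA (k+1) hk1
      rw [h1, h2]
      exact_mod_cast e.strictMono (show (⟨k, hk⟩ : Fin t) < ⟨k+1, hk1⟩ from Fin.mk_lt_mk.mpr (Nat.lt_succ_self k))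
    have hnea : lo (a k) ≠ lo (a (k+1)) := by
      rw [hloak, hloak1]; exact ne_of_lt hlt
    rcases hsep (a k) hakU (a (k+1)) hak1U hnea with h | h
    · rw [hloak1] at h; exact h
    · exfalso
      have h1 : a (k+1) ≤ hi (a (k+1)) := (hcc (a (k+1)) hak1U).2.2.1
      rw [hloak] at h
      linarith
  obtain ⟨r, rmono, rinv, rpl, rpr⟩ := reps_exist δ hδ0 t a b hab hord
  set pf : ℝ → ℝ := fun x => if h : lo x ∈ A then r ((e.symm ⟨lo x, h⟩ : Fin t) : ℕ) else x with hpf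
  refine ⟨r '' {k : ℕ | k < t}, pf, ?_, ?_⟩
  · intro x hx
    have hxD : x ∈ D := by
      rw [hD, Finset.mem_union]
      rcases hx with ⟨i, rfl⟩ | ⟨i, rfl⟩
      · exact Or.inl (Finset.mem_image.mpr ⟨i, Finset.mem_univ i, rfl⟩)
      · exact Or.inr (Finset.mem_image.mpr ⟨i, Finset.mem_univ i, rfl⟩)
    have hxU : x ∈ U := hDU x hxD
    have hloA : lo x ∈ A := by rw [hA]; exact Finset.mem_image_of_mem lo hxD
    set k : ℕ := ((e.symm ⟨lo x, hloA⟩ : Fin t) : ℕ) with hkdef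
    have hk : k < t := (e.symm ⟨lo x, hloA⟩).isLt
    have hpfx : pf x = r k := by rw [hpf]; simp only [dif_pos hloA]; rfl
    have hak : a k = lo x := by
      obtain ⟨_, h1⟩ := haA k hk
      rw [h1]
      have h2 : (⟨k, hk⟩ : Fin t) = e.symm ⟨lo x, hloA⟩ := Fin.ext rfl
      rw [h2, OrderIso.apply_symm_apply]
    obtain ⟨_, hlox, hhix, hlenx, heqx⟩ := hcc x hxU
    have hbk : b k = hi x := by
      rw [hb]; simp only; rw [hak]
      rw [hhi]; simp only; rw [heqx]
    have haxk : a k ≤ x := by rw [hak]; exact hlox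
    have hxbk : x ≤ b k := by rw [hbk]; exact hhix
    have hbak : b k - a k ≤ δ := by rw [hak, hbk]; exact hlenx
    obtain ⟨hr1, hr2⟩ := rinv k hk
    rw [hpfx]
    refine ⟨⟨k, hk, rfl⟩, ?_, ?_, ?_⟩
    · rintro rr ⟨j, hj, rfl⟩
      rcases lt_trichotomy j k with hjk | hjk | hjk
      · obtain ⟨hle, hcase⟩ := rpl j k hjk hk
        rcases hcase with hcase | hcase
        · rw [hcase]
        · exact abs_le_left (r j) (r k) x hle (by linarith)
      · rw [hjk]
      · rcases rpr k j hjk hj with hcase | ⟨hlt, hsum⟩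
        · rw [hcase]
        · exact le_of_lt (abs_lt_right (r k) (r j) x hlt (by linarith))
    · rintro rr ⟨j, hj, rfl⟩ habs
      rcases lt_trichotomy j k with hjk | hjk | hjk
      · exact (rpl j k hjk hk).1
      · rw [hjk]
      · rcases rpr k j hjk hj with hcase | ⟨hlt, hsum⟩
        · rw [hcase]
        · exact absurd habs (ne_of_gt (abs_lt_right (r k) (r j) x hlt (by linarith)))
    · rw [abs_le]
      constructor <;> linarith
  · intro i
    have hPU : P i ∈ U := Set.mem_iUnion.mpr ⟨i, Set.left_mem_uIcc⟩
    have hQP : Q i ∈ connectedComponentIn U (P i) := by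
      have hsubU : Set.uIcc (P i) (Q i) ⊆ U := Set.subset_iUnion (fun i => Set.uIcc (P i) (Q i)) i
      have := (isPreconnected_uIcc (a := P i) (b := Q i)).subset_connectedComponentIn
        Set.left_mem_uIcc hsubU
      exact this Set.right_mem_uIcc
    have hloPQ : lo (P i) = lo (Q i) := by
      rw [hlo]; simp only
      rw [connectedComponentIn_eq hQP]
    have hQD : Q i ∈ D := by
      rw [hD, Finset.mem_union]
      exact Or.inr (Finset.mem_image.mpr ⟨i, Finset.mem_univ i, rfl⟩)
    have hQA : lo (Q i) ∈ A := by rw [hA]; exact Finset.mem_image_of_mem lo hQD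
    rw [hpf]
    simp only [hloPQ, dif_pos hQA]
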